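/- Define f(u) = 4u·arctan(1/(2u)) − 4u²·log(1 + 1/(4u²)) and g(u) = 4u·arcsinh(1/(2u)) − 8u²(sqrt(1 + 1/(4u²)) − 1) for u > 0. Then f(u) − g(u)² = 7/(11520 u⁴) + O(1/u⁶) as u → ∞. -/

import Mathlib

open Filter Set

/-- If `F` has derivative `F'` on `[0,b]` with `F' ≥ 0` there and `F 0 = 0`,
then `F x ≥ 0` on `[0,b]`. -/
lemma nonneg_of_deriv_nonneg {b : ℝ} {F F' : ℝ → ℝ}
    (hF : ∀ t ∈ Icc (0:ℝ) b, HasDerivAt F (F' t) t)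
    (hd : ∀ t ∈ Icc (0:ℝ) b, 0 ≤ F' t)
    (h0 : F 0 = 0) {x : ℝ} (hx : x ∈ Icc (0:ℝ) b) : 0 ≤ F x := by
  have hmono : MonotoneOn F (Icc (0:ℝ) b) := by
    apply monotoneOn_of_deriv_nonneg (convex_Icc 0 b)
    · intro t ht; exact (hF t ht).continuousAt.continuousWithinAt
    · intro t ht
      rw [interior_Icc] at ht
      exact ((hF t (Ioo_subset_Icc_self ht)).differentiableAt).differentiableWithinAt
    · intro t ht
      rw [interior_Icc] at ht
      rw [(hF t (Ioo_subset_Icc_self ht)).deriv]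
      exact hd t (Ioo_subset_Icc_self ht)
  have h0b : (0:ℝ) ∈ Icc (0:ℝ) b := ⟨le_refl 0, le_trans hx.1 hx.2⟩
  have := hmono h0b hx hx.1
  rw [h0] at this; exact this

lemma arctan_upper {x : ℝ} (hx : x ∈ Icc (0:ℝ) (1/2)) :
    Real.arctan x ≤ x - x^3/3 + x^5/5 := by
  have h := nonneg_of_deriv_nonneg (b := 1/2)
    (F := fun t => t - t^3/3 + t^5/5 - Real.arctan t)
    (F' := fun t => 1 - t^2 + t^4 - 1/(1+t^2))
    (fun t _ => by
      have h1 : HasDerivAt (fun t : ℝ => t - t^3/3 + t^5/5)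
          (1 - t^2 + t^4) t := by
        have := ((hasDerivAt_id t).sub ((hasDerivAt_pow 3 t).div_const 3)).add
          ((hasDerivAt_pow 5 t).div_const 5)
        refine this.congr_deriv ?_; push_cast; ring
      exact h1.sub (Real.hasDerivAt_arctan t))
    (fun t ht => by
      have hpos : (0:ℝ) < 1 + t^2 := by positivity
      have : 1/(1+t^2) ≤ 1 - t^2 + t^4 := by
        rw [div_le_iff₀ hpos]; nlinarith [pow_nonneg ht.1 6]
      linarith)
    (by simp) hx
  linarith

lemma arctan_lower {x : ℝ} (hx : x ∈ Icc (0:ℝ) (1/2)) :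
    x - x^3/3 + x^5/5 - x^7/7 ≤ Real.arctan x := by
  have h := nonneg_of_deriv_nonneg (b := 1/2)
    (F := fun t => Real.arctan t - (t - t^3/3 + t^5/5 - t^7/7))
    (F' := fun t => 1/(1+t^2) - (1 - t^2 + t^4 - t^6))
    (fun t _ => by
      have h1 : HasDerivAt (fun t : ℝ => t - t^3/3 + t^5/5 - t^7/7)
          (1 - t^2 + t^4 - t^6) t := by
        have := (((hasDerivAt_id t).sub ((hasDerivAt_pow 3 t).div_const 3)).add
          ((hasDerivAt_pow 5 t).div_const 5)).sub ((hasDerivAt_pow 7 t).div_const 7)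
        refine this.congr_deriv ?_; push_cast; ring
      exact (Real.hasDerivAt_arctan t).sub h1)
    (fun t ht => by
      have hpos : (0:ℝ) < 1 + t^2 := by positivity
      have : 1 - t^2 + t^4 - t^6 ≤ 1/(1+t^2) := by
        rw [le_div_iff₀ hpos]; nlinarith [pow_nonneg ht.1 8]
      linarith)
    (by simp) hx
  linarith

lemma log_upper {y : ℝ} (hy : y ∈ Icc (0:ℝ) (1/4)) :
    Real.log (1+y) ≤ y - y^2/2 + y^3/3 := by
  have h := nonneg_of_deriv_nonneg (b := 1/4)
    (F := fun t => t - t^2/2 + t^3/3 - Real.log (1+t))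
    (F' := fun t => 1 - t + t^2 - 1/(1+t))
    (fun t ht => by
      have hne : (1:ℝ) + t ≠ 0 := by nlinarith [ht.1]
      have h1 : HasDerivAt (fun t : ℝ => t - t^2/2 + t^3/3)
          (1 - t + t^2) t := by
        have := ((hasDerivAt_id t).sub ((hasDerivAt_pow 2 t).div_const 2)).add
          ((hasDerivAt_pow 3 t).div_const 3)
        refine this.congr_deriv ?_; push_cast; ring
      have h2 : HasDerivAt (fun t : ℝ => Real.log (1+t)) (1/(1+t)) t := by
        have := ((hasDerivAt_id t).const_add 1).log hne
        exact this
      exact h1.sub h2)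
    (fun t ht => by
      have hpos : (0:ℝ) < 1 + t := by nlinarith [ht.1]
      have : 1/(1+t) ≤ 1 - t + t^2 := by
        rw [div_le_iff₀ hpos]; nlinarith [pow_nonneg ht.1 3]
      linarith)
    (by simp) hy
  linarith

lemma log_lower {y : ℝ} (hy : y ∈ Icc (0:ℝ) (1/4)) :
    y - y^2/2 + y^3/3 - y^4/4 ≤ Real.log (1+y) := by
  have h := nonneg_of_deriv_nonneg (b := 1/4)
    (F := fun t => Real.log (1+t) - (t - t^2/2 + t^3/3 - t^4/4))
    (F' := fun t => 1/(1+t) - (1 - t + t^2 - t^3))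
    (fun t ht => by
      have hne : (1:ℝ) + t ≠ 0 := by nlinarith [ht.1]
      have h1 : HasDerivAt (fun t : ℝ => t - t^2/2 + t^3/3 - t^4/4)
          (1 - t + t^2 - t^3) t := by
        have := (((hasDerivAt_id t).sub ((hasDerivAt_pow 2 t).div_const 2)).add
          ((hasDerivAt_pow 3 t).div_const 3)).sub ((hasDerivAt_pow 4 t).div_const 4)
        refine this.congr_deriv ?_; push_cast; ring
      have h2 : HasDerivAt (fun t : ℝ => Real.log (1+t)) (1/(1+t)) t := by
        have := ((hasDerivAt_id t).const_add 1).log hne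
        exact this
      exact h2.sub h1)
    (fun t ht => by
      have hpos : (0:ℝ) < 1 + t := by nlinarith [ht.1]
      have : 1 - t + t^2 - t^3 ≤ 1/(1+t) := by
        rw [le_div_iff₀ hpos]; nlinarith [pow_nonneg ht.1 4]
      linarith)
    (by simp) hy
  linarith

lemma sqrt_upper {s : ℝ} (hs : s ∈ Icc (0:ℝ) (1/4)) :
    Real.sqrt (1+s) ≤ 1 + s/2 - s^2/8 + s^3/16 := by
  have hq : (0:ℝ) ≤ 1 + s/2 - s^2/8 + s^3/16 := by nlinarith [hs.1, hs.2]
  have hle : 1 + s ≤ (1 + s/2 - s^2/8 + s^3/16)^2 := by nlinarith [hs.1, hs.2, pow_nonneg hs.1 4]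
  calc Real.sqrt (1+s) ≤ Real.sqrt ((1 + s/2 - s^2/8 + s^3/16)^2) := Real.sqrt_le_sqrt hle
    _ = 1 + s/2 - s^2/8 + s^3/16 := Real.sqrt_sq hq

lemma sqrt_lower {s : ℝ} (hs : s ∈ Icc (0:ℝ) (1/4)) :
    1 + s/2 - s^2/8 + s^3/16 - s^4/8 ≤ Real.sqrt (1+s) := by
  have hq : (0:ℝ) ≤ 1 + s/2 - s^2/8 + s^3/16 - s^4/8 := by
    have h2 : s^2 ≤ s/4 := by nlinarith [hs.1, hs.2]
    have h4 : s^4 ≤ s^3/4 := by nlinarith [hs.1, hs.2, pow_nonneg hs.1 3]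
    nlinarith [hs.1, pow_nonneg hs.1 3]
  have hle : (1 + s/2 - s^2/8 + s^3/16 - s^4/8)^2 ≤ 1 + s := by
    nlinarith [hs.1, hs.2, pow_nonneg hs.1 4, pow_nonneg hs.1 5, pow_nonneg hs.1 6]
  calc 1 + s/2 - s^2/8 + s^3/16 - s^4/8
      = Real.sqrt ((1 + s/2 - s^2/8 + s^3/16 - s^4/8)^2) := (Real.sqrt_sq hq).symm
    _ ≤ Real.sqrt (1+s) := Real.sqrt_le_sqrt hle

lemma invsqrt_upper {t : ℝ} (ht : t ∈ Icc (0:ℝ) (1/2)) :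
    (Real.sqrt (1+t^2))⁻¹ ≤ 1 - t^2/2 + 3*t^4/8 := by
  have hpos : (0:ℝ) < 1 + t^2 := by positivity
  have hq : (0:ℝ) ≤ 1 - t^2/2 + 3*t^4/8 := by nlinarith [ht.1, ht.2]
  have hle : (1+t^2)⁻¹ ≤ (1 - t^2/2 + 3*t^4/8)^2 := by
    rw [inv_eq_one_div, div_le_iff₀ hpos]
    nlinarith [ht.1, ht.2, pow_nonneg ht.1 6, pow_nonneg ht.1 8]
  calc (Real.sqrt (1+t^2))⁻¹ = Real.sqrt ((1+t^2)⁻¹) := (Real.sqrt_inv _).symm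
    _ ≤ Real.sqrt ((1 - t^2/2 + 3*t^4/8)^2) := Real.sqrt_le_sqrt hle
    _ = 1 - t^2/2 + 3*t^4/8 := Real.sqrt_sq hq

lemma invsqrt_lower {t : ℝ} (ht : t ∈ Icc (0:ℝ) (1/2)) :
    1 - t^2/2 + 3*t^4/8 - 5*t^6/16 ≤ (Real.sqrt (1+t^2))⁻¹ := by
  have hpos : (0:ℝ) < 1 + t^2 := by positivity
  have hq : (0:ℝ) ≤ 1 - t^2/2 + 3*t^4/8 - 5*t^6/16 := by
    have h2 : t^2 ≤ 1/4 := by nlinarith [ht.1, ht.2]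
    have h6 : t^6 ≤ 1/64 := by
      nlinarith [mul_nonneg (sub_nonneg.2 h2) (sq_nonneg (t^2)),
        mul_nonneg (sub_nonneg.2 h2) (sq_nonneg t), sq_nonneg t]
    nlinarith [pow_nonneg ht.1 4]
  have hle : (1 - t^2/2 + 3*t^4/8 - 5*t^6/16)^2 ≤ (1+t^2)⁻¹ := by
    rw [inv_eq_one_div, le_div_iff₀ hpos]
    nlinarith [ht.1, ht.2, pow_nonneg ht.1 6, pow_nonneg ht.1 8, pow_nonneg ht.1 10,
      pow_nonneg ht.1 12, pow_nonneg ht.1 14]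
  calc 1 - t^2/2 + 3*t^4/8 - 5*t^6/16
      = Real.sqrt ((1 - t^2/2 + 3*t^4/8 - 5*t^6/16)^2) := (Real.sqrt_sq hq).symm
    _ ≤ Real.sqrt ((1+t^2)⁻¹) := Real.sqrt_le_sqrt hle
    _ = (Real.sqrt (1+t^2))⁻¹ := Real.sqrt_inv _

lemma arsinh_upper {x : ℝ} (hx : x ∈ Icc (0:ℝ) (1/2)) :
    Real.arsinh x ≤ x - x^3/6 + 3*x^5/40 := by
  have h := nonneg_of_deriv_nonneg (b := 1/2)
    (F := fun t => t - t^3/6 + 3*t^5/40 - Real.arsinh t)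
    (F' := fun t => 1 - t^2/2 + 3*t^4/8 - (Real.sqrt (1+t^2))⁻¹)
    (fun t _ => by
      have h1 : HasDerivAt (fun t : ℝ => t - t^3/6 + 3*t^5/40)
          (1 - t^2/2 + 3*t^4/8) t := by
        have := ((hasDerivAt_id t).sub ((hasDerivAt_pow 3 t).div_const 6)).add
          (((hasDerivAt_pow 5 t).const_mul 3).div_const 40)
        refine this.congr_deriv ?_; push_cast; ring
      exact h1.sub (Real.hasDerivAt_arsinh t))
    (fun t ht => by have := invsqrt_upper ht; linarith)
    (by simp) hx
  linarith

lemma arsinh_lower {x : ℝ} (hx : x ∈ Icc (0:ℝ) (1/2)) :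
    x - x^3/6 + 3*x^5/40 - 5*x^7/112 ≤ Real.arsinh x := by
  have h := nonneg_of_deriv_nonneg (b := 1/2)
    (F := fun t => Real.arsinh t - (t - t^3/6 + 3*t^5/40 - 5*t^7/112))
    (F' := fun t => (Real.sqrt (1+t^2))⁻¹ - (1 - t^2/2 + 3*t^4/8 - 5*t^6/16))
    (fun t _ => by
      have h1 : HasDerivAt (fun t : ℝ => t - t^3/6 + 3*t^5/40 - 5*t^7/112)
          (1 - t^2/2 + 3*t^4/8 - 5*t^6/16) t := by
        have := (((hasDerivAt_id t).sub ((hasDerivAt_pow 3 t).div_const 6)).add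
          (((hasDerivAt_pow 5 t).const_mul 3).div_const 40)).sub
          (((hasDerivAt_pow 7 t).const_mul 5).div_const 112)
        refine this.congr_deriv ?_; push_cast; ring
      exact (Real.hasDerivAt_arsinh t).sub h1)
    (fun t ht => by have := invsqrt_lower ht; linarith)
    (by simp) hx
  linarith

set_option maxHeartbeats 1000000 in
lemma key_bound {x : ℝ} (hx : x ∈ Icc (0:ℝ) (1/2)) :
    |2*x^3*Real.arctan x - x^2*Real.log (1+x^2)
      - (2*x*Real.arsinh x - 2*(Real.sqrt (1+x^2) - 1))^2 - 7*x^8/720| ≤ x^10 := by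
  have hx0 : (0:ℝ) ≤ x := hx.1
  have hx12 : x ≤ 1/2 := hx.2
  have h2 : x^2 ≤ 1/4 := by nlinarith
  have h4 : x^4 ≤ 1/16 := by nlinarith [mul_nonneg (sub_nonneg.2 h2) (pow_nonneg hx0 2)]
  have h6 : x^6 ≤ 1/64 := by
    nlinarith [mul_nonneg (sub_nonneg.2 h2) (sq_nonneg (x^2)),
      mul_nonneg (sub_nonneg.2 h2) (sq_nonneg x), sq_nonneg x]
  have hy : x^2 ∈ Icc (0:ℝ) (1/4) := ⟨by positivity, h2⟩
  have hA1 := arctan_lower hx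
  have hA2 := arctan_upper hx
  have hL1 := log_lower hy
  have hL2 := log_upper hy
  have hS1 := sqrt_lower hy
  have hS2 := sqrt_upper hy
  have hH1 := arsinh_lower hx
  have hH2 := arsinh_upper hx
  set A := Real.arctan x
  set L := Real.log (1+x^2)
  set S := Real.sqrt (1+x^2)
  set H := Real.arsinh x
  set B := 2*x*H - 2*(S - 1) with hBdef
  have h2x : (0:ℝ) ≤ 2*x := by linarith
  have hBlo : x^2 - x^4/12 + x^6/40 - 5*x^8/56 ≤ B := by
    have := mul_le_mul_of_nonneg_left hH1 h2x
    nlinarith [hS2]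
  have hBhi : B ≤ x^2 - x^4/12 + x^6/40 + x^8/4 := by
    have := mul_le_mul_of_nonneg_left hH2 h2x
    nlinarith [hS1]
  have hB0 : (0:ℝ) ≤ x^2 - x^4/12 + x^6/40 - 5*x^8/56 := by
    nlinarith [pow_nonneg hx0 2, pow_nonneg hx0 6, h2,
      mul_nonneg (sub_nonneg.2 h2) (pow_nonneg hx0 2),
      mul_nonneg (sub_nonneg.2 h2) (pow_nonneg hx0 6)]
  have hB2lo : (x^2 - x^4/12 + x^6/40 - 5*x^8/56)^2 ≤ B^2 :=
    pow_le_pow_left₀ hB0 hBlo 2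
  have hB2hi : B^2 ≤ (x^2 - x^4/12 + x^6/40 + x^8/4)^2 :=
    pow_le_pow_left₀ (hB0.trans hBlo) hBhi 2
  have h2x3 : (0:ℝ) ≤ 2*x^3 := by positivity
  have hfA1 := mul_le_mul_of_nonneg_left hA1 h2x3
  have hfA2 := mul_le_mul_of_nonneg_left hA2 h2x3
  have hx2' : (0:ℝ) ≤ x^2 := by positivity
  have hfL1 := mul_le_mul_of_nonneg_left hL1 hx2'
  have hfL2 := mul_le_mul_of_nonneg_left hL2 hx2'
  rw [abs_le]
  constructor
  · -- lower bound
    have hl1 : (0:ℝ) ≤ x^10 * (367/1680 - x^4/80 - x^6/16) := by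
      apply mul_nonneg (pow_nonneg hx0 10); nlinarith
    linarith [hfA1, hfL2, hB2hi, hl1, pow_nonneg hx0 12]
  · -- upper bound
    have hu2 : (0:ℝ) ≤ x^12 * (521/33600 - x^2/224) := by
      apply mul_nonneg (pow_nonneg hx0 12); nlinarith
    linarith [hfA2, hfL1, hB2lo, hu2, pow_nonneg hx0 10, pow_nonneg hx0 16]

/-- Extended-target MIMO: `f(u) − g(u)² = 7/(11520u⁴) + O(1/u⁶)` as `u → ∞`. -/
theorem et_mimo_crb_asymptotics :
    (fun u : ℝ =>
      (4*u * Real.arctan (1/(2*u)) - 4*u^2 * Real.log (1 + 1/(4*u^2)))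
        - (4*u * Real.arsinh (1/(2*u)) - 8*u^2 * (Real.sqrt (1 + 1/(4*u^2)) - 1))^2
        - 7/(11520*u^4))
      =O[atTop] (fun u : ℝ => 1/u^6) := by
  rw [Asymptotics.isBigO_iff]
  refine ⟨1, ?_⟩
  filter_upwards [eventually_ge_atTop (1:ℝ)] with u hu
  have hu0 : (0:ℝ) < u := by linarith
  set x : ℝ := 1/(2*u) with hxdef
  have hx0 : (0:ℝ) < x := by positivity
  have hxne : x ≠ 0 := ne_of_gt hx0
  have hune : u ≠ 0 := ne_of_gt hu0
  have hx12 : x ≤ 1/2 := by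
    rw [hxdef, div_le_div_iff₀ (by linarith) (by norm_num)]; linarith
  have hx2 : 1 + 1/(4*u^2) = 1 + x^2 := by
    rw [hxdef]; field_simp; ring
  have hkey := key_bound ⟨hx0.le, hx12⟩
  set A := Real.arctan x
  set L := Real.log (1+x^2)
  set S := Real.sqrt (1+x^2)
  set H := Real.arsinh x
  have hE : (4*u * A - 4*u^2 * L - (4*u * H - 8*u^2 * (S - 1))^2 - 7/(11520*u^4)) * x^4
      = 2*x^3*A - x^2*L - (2*x*H - 2*(S - 1))^2 - 7*x^8/720 := by
    have hux : u = 1/(2*x) := by rw [hxdef]; field_simp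
    rw [hux]; field_simp; ring
  rw [Real.norm_eq_abs, Real.norm_eq_abs, hx2, one_mul]
  have hx4 : (0:ℝ) < x^4 := by positivity
  have habs : |4*u * A - 4*u^2 * L - (4*u * H - 8*u^2 * (S - 1))^2 - 7/(11520*u^4)| * x^4
      ≤ x^10 := by
    rw [← abs_of_pos hx4, ← abs_mul, hE]; exact hkey
  have h1 : |4*u * A - 4*u^2 * L - (4*u * H - 8*u^2 * (S - 1))^2 - 7/(11520*u^4)| ≤ x^6 := by
    rw [← mul_le_mul_iff_of_pos_right hx4]
    calc _ ≤ x^10 := habs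
      _ = x^6 * x^4 := by ring
  have hx6 : x^6 = 1/(64*u^6) := by rw [hxdef]; field_simp; ring
  have h2 : |1/u^6| = 1/u^6 := abs_of_pos (by positivity)
  rw [h2]
  calc |4*u * A - 4*u^2 * L - (4*u * H - 8*u^2 * (S - 1))^2 - 7/(11520*u^4)|
      ≤ x^6 := h1
    _ = 1/(64*u^6) := hx6
    _ ≤ 1/u^6 := by
        apply div_le_div_of_nonneg_left (by norm_num) (by positivity)
        nlinarith [pow_pos hu0 6]
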